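/- Let G be a finite connected simple graph on n ≥ 2 vertices whose discriminative diameter satisfies DD(G) ≤ c for some constant c > 0, and let X_1, …, X_T be vertices of G chosen independently and uniformly at random with β = (1/T) · Σ_{t=1}^{T} DC(X_t). Then for every ε > 0 and δ ∈ (0,1), if T ≥ c²·ln(2/δ)/(2ε²), the probability that |ADPL(G) − β| > ε is at most δ. -/

import Mathlib

open Finset Real


/-- The number of shortest paths between `v` and `u`: walks from `v` to `u`
whose length equals the graph distance (such walks are exactly the shortest paths). -/
noncomputable def nsp {V : Type*} (G : SimpleGraph V) (v u : V) : ℕ :=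
  Nat.card {p : G.Walk v u // p.length = G.dist v u}

/-- The discriminative distance `dd(v,u) = d(v,u) / σ(v,u)`. -/
noncomputable def dd {V : Type*} (G : SimpleGraph V) (v u : V) : ℝ :=
  (G.dist v u : ℝ) / (nsp G v u : ℝ)

/-- Discriminative closeness `DC(v) = (1/(n-1)) ⬝ Σ_{u ≠ v} dd(v,u)`. -/
noncomputable def DC {V : Type*} [Fintype V] [DecidableEq V] (G : SimpleGraph V) (v : V) : ℝ :=
  (1 / ((Fintype.card V : ℝ) - 1)) * ∑ u ∈ Finset.univ.erase v, dd G v u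

/-- Average discriminative path length `ADPL(G) = (1/(n(n-1))) ⬝ Σ_v Σ_{u ≠ v} dd(v,u)`. -/
noncomputable def ADPL {V : Type*} [Fintype V] [DecidableEq V] (G : SimpleGraph V) : ℝ :=
  (1 / ((Fintype.card V : ℝ) * ((Fintype.card V : ℝ) - 1))) *
    ∑ v : V, ∑ u ∈ Finset.univ.erase v, dd G v u

/-- If the discriminative diameter of `G` is bounded by a constant `c > 0`
(i.e. `dd(v,u) ≤ c` for all distinct `v,u`), then for `T ≥ c² ln(2/δ)/(2ε²)` vertices
chosen independently and uniformly at random (i.e. `ω : Fin T → V` drawn uniformly,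
`X_t = ω t`) and `β(ω) = (1/T) Σ_t DC(X_t)`, the probability (number of favourable
outcomes divided by the total number of outcomes) that `|ADPL(G) − β| > ε` is at most `δ`. -/


lemma hoeffding_mgf {ι : Type*} [Fintype ι] (w X : ι → ℝ) (a b : ℝ)
    (hw0 : ∀ i, 0 ≤ w i) (hw1 : ∑ i, w i = 1)
    (hXa : ∀ i, a ≤ X i) (hXb : ∀ i, X i ≤ b)
    (hmean : ∑ i, w i * X i = 0) (s : ℝ) (hs : 0 ≤ s) :
    ∑ i, w i * Real.exp (s * X i) ≤ Real.exp (s ^ 2 * (b - a) ^ 2 / 8) := by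
  classical
  set f0 : ℝ → ℝ := fun t => ∑ i, w i * Real.exp (t * X i) with hf0def
  set f1 : ℝ → ℝ := fun t => ∑ i, (w i * X i) * Real.exp (t * X i) with hf1def
  set f2 : ℝ → ℝ := fun t => ∑ i, (w i * X i * X i) * Real.exp (t * X i) with hf2def
  -- basic derivative helper
  have hder : ∀ (c : ι → ℝ) (t : ℝ),
      HasDerivAt (fun u => ∑ i, c i * Real.exp (u * X i))
        (∑ i, (c i * X i) * Real.exp (t * X i)) t := by
    intro c t
    have h : ∀ i ∈ Finset.univ, HasDerivAt (fun u => c i * Real.exp (u * X i))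
        ((c i * X i) * Real.exp (t * X i)) t := by
      intro i _
      have h1 : HasDerivAt (fun u : ℝ => u * X i) (X i) t := by
        simpa using (hasDerivAt_id t).mul_const (X i)
      have := (h1.exp).const_mul (c i)
      exact this.congr_deriv (by ring)
    exact HasDerivAt.fun_sum h
  have hd0 : ∀ t, HasDerivAt f0 (f1 t) t := fun t => hder w t
  have hd1 : ∀ t, HasDerivAt f1 (f2 t) t := fun t => hder (fun i => w i * X i) t
  -- positivity of f0
  have hpos : ∀ t, 0 < f0 t := by
    intro t
    obtain ⟨i, hi⟩ : ∃ i, 0 < w i := by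
      by_contra h
      push_neg at h
      have : ∑ i, w i ≤ 0 := Finset.sum_nonpos fun i _ => h i
      linarith [hw1]
    refine Finset.sum_pos' (fun j _ => mul_nonneg (hw0 j) (Real.exp_pos _).le)
      ⟨i, Finset.mem_univ i, mul_pos hi (Real.exp_pos _)⟩
  have hf0zero : f0 0 = 1 := by
    simp only [hf0def, zero_mul, Real.exp_zero, mul_one, hw1]
  have hf1zero : f1 0 = 0 := by
    simp only [hf1def, zero_mul, Real.exp_zero, mul_one]
    exact hmean
  -- the key second-derivative bound
  have hkey : ∀ t, (f2 t * f0 t - f1 t * f1 t) / (f0 t) ^ 2 ≤ (b - a) ^ 2 / 4 := by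
    intro t
    set m := (a + b) / 2 with hm
    set A := ∑ i, (w i * Real.exp (t * X i)) * (X i - m) ^ 2 with hAdef
    set B := ∑ i, (w i * Real.exp (t * X i)) * (X i - m) with hBdef
    have hA : A = f2 t - 2 * m * f1 t + m ^ 2 * f0 t := by
      simp only [hAdef, hf0def, hf1def, hf2def, Finset.mul_sum,
        ← Finset.sum_sub_distrib, ← Finset.sum_add_distrib]
      exact Finset.sum_congr rfl fun i _ => by ring
    have hB : B = f1 t - m * f0 t := by
      simp only [hBdef, hf0def, hf1def, Finset.mul_sum, ← Finset.sum_sub_distrib]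
      exact Finset.sum_congr rfl fun i _ => by ring
    have hAle : A ≤ (b - a) ^ 2 / 4 * f0 t := by
      rw [hAdef, hf0def, Finset.mul_sum]
      refine Finset.sum_le_sum fun i _ => ?_
      have h1 : (X i - m) ^ 2 ≤ ((b - a) / 2) ^ 2 := by
        have := hXa i; have := hXb i
        refine sq_le_sq' (by rw [hm]; linarith) (by rw [hm]; linarith)
      have h2 : (0:ℝ) ≤ w i * Real.exp (t * X i) := mul_nonneg (hw0 i) (Real.exp_pos _).le
      calc (w i * Real.exp (t * X i)) * (X i - m) ^ 2
          ≤ (w i * Real.exp (t * X i)) * ((b - a) / 2) ^ 2 :=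
            mul_le_mul_of_nonneg_left h1 h2
        _ = (b - a) ^ 2 / 4 * (w i * Real.exp (t * X i)) := by ring
    have hid : f2 t * f0 t - f1 t * f1 t = A * f0 t - B ^ 2 := by
      rw [hA, hB]; ring
    rw [div_le_iff₀ (pow_pos (hpos t) 2)]
    have h3 : A * f0 t ≤ (b - a) ^ 2 / 4 * f0 t * f0 t :=
      mul_le_mul_of_nonneg_right hAle (hpos t).le
    nlinarith [sq_nonneg B]
  -- ψ = derivative of φ, with φ t = (b-a)^2/8 t^2 - log (f0 t)
  set ψ : ℝ → ℝ := fun t => (b - a) ^ 2 / 4 * t - f1 t / f0 t with hψdef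
  have hdψ : ∀ t, HasDerivAt ψ
      ((b - a) ^ 2 / 4 - (f2 t * f0 t - f1 t * f1 t) / (f0 t) ^ 2) t := by
    intro t
    have h1 : HasDerivAt (fun u : ℝ => (b - a) ^ 2 / 4 * u) ((b - a) ^ 2 / 4) t := by
      simpa using (hasDerivAt_id t).const_mul ((b - a) ^ 2 / 4)
    exact h1.sub ((hd1 t).div (hd0 t) (hpos t).ne')
  have hψmono : Monotone ψ := by
    refine monotone_of_deriv_nonneg (fun t => ((hdψ t).differentiableAt)) fun t => ?_
    rw [(hdψ t).deriv]
    linarith [hkey t]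
  have hψ0 : ψ 0 = 0 := by
    simp [hψdef, hf1zero, hf0zero]
  set φ : ℝ → ℝ := fun t => (b - a) ^ 2 / 8 * t ^ 2 - Real.log (f0 t) with hφdef
  have hdφ : ∀ t, HasDerivAt φ (ψ t) t := by
    intro t
    have h1 : HasDerivAt (fun u : ℝ => (b - a) ^ 2 / 8 * u ^ 2)
        ((b - a) ^ 2 / 8 * (2 * t)) t := by
      simpa using (hasDerivAt_pow 2 t).const_mul ((b - a) ^ 2 / 8)
    have h2 := (hd0 t).log (hpos t).ne'
    have := h1.sub h2
    exact this.congr_deriv (by simp only [hψdef]; ring)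
  have hφmono : MonotoneOn φ (Set.Ici 0) := by
    refine monotoneOn_of_deriv_nonneg (convex_Ici 0)
      (Continuous.continuousOn (by
        have : Differentiable ℝ φ := fun t => (hdφ t).differentiableAt
        exact this.continuous))
      (fun t _ => (hdφ t).differentiableAt.differentiableWithinAt) ?_
    intro t ht
    rw [(hdφ t).deriv]
    rw [interior_Ici] at ht
    have : ψ 0 ≤ ψ t := hψmono (le_of_lt ht)
    linarith [hψ0 ▸ this]
  have hφ0 : φ 0 = 0 := by simp [hφdef, hf0zero]
  have hfinal : φ 0 ≤ φ s := hφmono Set.self_mem_Ici (Set.mem_Ici.mpr hs) hs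
  rw [hφ0, hφdef] at hfinal
  have hlog : Real.log (f0 s) ≤ (b - a) ^ 2 / 8 * s ^ 2 := by
    simp only at hfinal; linarith
  have := Real.exp_le_exp.mpr hlog
  rw [Real.exp_log (hpos s)] at this
  calc f0 s ≤ Real.exp ((b - a) ^ 2 / 8 * s ^ 2) := this
    _ = Real.exp (s ^ 2 * (b - a) ^ 2 / 8) := by ring_nf

lemma tail_count {V : Type*} [Fintype V] [Nonempty V] (Y : V → ℝ) (a b : ℝ)
    (hYa : ∀ v, a ≤ Y v) (hYb : ∀ v, Y v ≤ b) (hmean : ∑ v, Y v = 0)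
    (T : ℕ) (m s : ℝ) (hs : 0 ≤ s)
    [DecidablePred (fun ω : Fin T → V => m < ∑ t : Fin T, Y (ω t))] :
    ((Finset.univ.filter (fun ω : Fin T → V => m < ∑ t : Fin T, Y (ω t))).card : ℝ)
      ≤ (Fintype.card V : ℝ) ^ T *
        Real.exp ((T : ℝ) * (s ^ 2 * (b - a) ^ 2 / 8) - s * m) := by
  set n : ℝ := (Fintype.card V : ℝ) with hn
  have hnpos : 0 < n := by
    rw [hn]; exact_mod_cast Fintype.card_pos
  have hw1 : ∑ _v : V, (n⁻¹ : ℝ) = 1 := by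
    rw [Finset.sum_const, Finset.card_univ, nsmul_eq_mul, hn]
    field_simp
  have hmgf := hoeffding_mgf (fun _ => n⁻¹) Y a b (fun _ => by positivity) hw1 hYa hYb
    (by rw [← Finset.mul_sum, hmean, mul_zero]) s hs
  set E : ℝ := Real.exp (s ^ 2 * (b - a) ^ 2 / 8) with hE
  have hsum : ∑ v : V, Real.exp (s * Y v) ≤ n * E := by
    have h1 : ∑ v : V, Real.exp (s * Y v) = n * ∑ v : V, n⁻¹ * Real.exp (s * Y v) := by
      rw [Finset.mul_sum]
      exact Finset.sum_congr rfl fun v _ => by field_simp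
    rw [h1]
    exact mul_le_mul_of_nonneg_left hmgf hnpos.le
  have hexp : (∑ v : V, Real.exp (s * Y v)) ^ T
      = ∑ ω : Fin T → V, Real.exp (s * ∑ t : Fin T, Y (ω t)) := by
    calc (∑ v : V, Real.exp (s * Y v)) ^ T
        = ∏ _t : Fin T, ∑ v : V, Real.exp (s * Y v) := by
          rw [Finset.prod_const, Finset.card_univ, Fintype.card_fin]
      _ = ∑ ω ∈ Fintype.piFinset (fun _ : Fin T => Finset.univ),
            ∏ t : Fin T, Real.exp (s * Y (ω t)) := Finset.prod_univ_sum _ _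
      _ = ∑ ω : Fin T → V, ∏ t : Fin T, Real.exp (s * Y (ω t)) := by
          rw [Fintype.piFinset_univ]
      _ = ∑ ω : Fin T → V, Real.exp (s * ∑ t : Fin T, Y (ω t)) := by
          refine Finset.sum_congr rfl fun ω _ => ?_
          rw [Finset.mul_sum, Real.exp_sum]
  set Fl := Finset.univ.filter (fun ω : Fin T → V => m < ∑ t : Fin T, Y (ω t)) with hFl
  have hcount : (Fl.card : ℝ) * Real.exp (s * m)
      ≤ ∑ ω : Fin T → V, Real.exp (s * ∑ t : Fin T, Y (ω t)) := by
    have h1 : (Fl.card : ℝ) * Real.exp (s * m) = ∑ _ω ∈ Fl, Real.exp (s * m) := by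
      rw [Finset.sum_const, nsmul_eq_mul]
    rw [h1]
    refine le_trans (Finset.sum_le_sum fun ω hω => ?_)
      (Finset.sum_le_sum_of_subset_of_nonneg (Finset.filter_subset _ _)
        fun _ _ _ => (Real.exp_pos _).le)
    have hm : m < ∑ t : Fin T, Y (ω t) := (Finset.mem_filter.mp hω).2
    exact Real.exp_le_exp.mpr (mul_le_mul_of_nonneg_left hm.le hs)
  have hpow : (∑ v : V, Real.exp (s * Y v)) ^ T ≤ (n * E) ^ T := by
    refine pow_le_pow_left₀ ?_ hsum T
    exact Finset.sum_nonneg fun v _ => (Real.exp_pos _).le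
  have h2 : (Fl.card : ℝ) * Real.exp (s * m) ≤ n ^ T * E ^ T := by
    calc (Fl.card : ℝ) * Real.exp (s * m)
        ≤ (∑ v : V, Real.exp (s * Y v)) ^ T := by rw [hexp]; exact hcount
      _ ≤ (n * E) ^ T := hpow
      _ = n ^ T * E ^ T := mul_pow n E T
  have hET : E ^ T = Real.exp ((T : ℝ) * (s ^ 2 * (b - a) ^ 2 / 8)) := by
    rw [hE, ← Real.exp_nat_mul]
  rw [Real.exp_sub, ← hET]
  rw [← sub_nonneg] at h2 ⊢
  have hrw : n ^ T * (E ^ T / Real.exp (s * m)) - (Fl.card : ℝ)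
      = (n ^ T * E ^ T - (Fl.card : ℝ) * Real.exp (s * m)) / Real.exp (s * m) := by
    field_simp
  rw [hrw]
  exact div_nonneg h2 (Real.exp_pos _).le

theorem stmt5 {V : Type*} [Fintype V] [DecidableEq V] (G : SimpleGraph V)
    (hconn : G.Connected) (hn : 2 ≤ Fintype.card V)
    (c : ℝ) (hc : 0 < c) (hDD : ∀ v u : V, v ≠ u → dd G v u ≤ c)
    (T : ℕ) (hT : 0 < T) (ε : ℝ) (hε : 0 < ε) (δ : ℝ) (hδ0 : 0 < δ) (hδ1 : δ < 1)
    (hTbound : c ^ 2 * Real.log (2 / δ) / (2 * ε ^ 2) ≤ (T : ℝ)) :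
    (Nat.card {ω : Fin T → V |
        ε < |ADPL G - (1 / (T : ℝ)) * ∑ t : Fin T, DC G (ω t)|} : ℝ) /
      (Fintype.card (Fin T → V) : ℝ) ≤ δ := by
  classical
  have hVne : Nonempty V := by
    rw [← Fintype.card_pos_iff]; omega
  set n : ℝ := (Fintype.card V : ℝ) with hndef
  have hn2 : (2 : ℝ) ≤ n := by rw [hndef]; exact_mod_cast hn
  have hn1 : (1 : ℝ) ≤ n - 1 := by linarith
  have hnpos : 0 < n := by linarith
  set A : ℝ := ADPL G with hAdef
  set Y : V → ℝ := fun v => DC G v - A with hYdef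
  -- bounds on DC
  have hdd0 : ∀ v u : V, 0 ≤ dd G v u := fun v u =>
    div_nonneg (Nat.cast_nonneg _) (Nat.cast_nonneg _)
  have hDC0 : ∀ v, 0 ≤ DC G v := by
    intro v
    refine mul_nonneg (by positivity) (Finset.sum_nonneg fun u _ => hdd0 v u)
  have hcard_erase : ∀ v : V, ((Finset.univ.erase v).card : ℝ) = n - 1 := by
    intro v
    rw [Finset.card_erase_of_mem (Finset.mem_univ v), Finset.card_univ]
    rw [hndef]
    have : 1 ≤ Fintype.card V := by omega
    push_cast [Nat.cast_sub this]
    ring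
  have hDCc : ∀ v, DC G v ≤ c := by
    intro v
    have h1 : ∑ u ∈ Finset.univ.erase v, dd G v u ≤ (n - 1) * c := by
      calc ∑ u ∈ Finset.univ.erase v, dd G v u
          ≤ ∑ _u ∈ Finset.univ.erase v, c := by
            refine Finset.sum_le_sum fun u hu => ?_
            exact hDD v u (Ne.symm (Finset.mem_erase.mp hu).1)
        _ = (n - 1) * c := by
            rw [Finset.sum_const, nsmul_eq_mul, hcard_erase v]
    have h2 : (0:ℝ) < 1 / (n - 1) := by positivity
    calc DC G v = 1 / (n - 1) * ∑ u ∈ Finset.univ.erase v, dd G v u := rfl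
      _ ≤ 1 / (n - 1) * ((n - 1) * c) := mul_le_mul_of_nonneg_left h1 h2.le
      _ = c := by field_simp
  -- the mean of DC is ADPL
  have hsumDC : ∑ v : V, DC G v = n * A := by
    rw [hAdef]
    show ∑ v : V, (1 / (n - 1)) * ∑ u ∈ Finset.univ.erase v, dd G v u
      = n * ((1 / (n * (n - 1))) * ∑ v : V, ∑ u ∈ Finset.univ.erase v, dd G v u)
    rw [← Finset.mul_sum]
    have hne : n - 1 ≠ 0 := by linarith
    field_simp
  have hmean : ∑ v : V, Y v = 0 := by
    rw [hYdef]
    simp only [Finset.sum_sub_distrib, hsumDC, Finset.sum_const, Finset.card_univ,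
      nsmul_eq_mul, ← hndef]
    ring
  -- the two tail events
  set s : ℝ := 4 * ε / c ^ 2 with hsdef
  have hs : 0 ≤ s := by positivity
  have hexpid : (T : ℝ) * (s ^ 2 * c ^ 2 / 8) - s * ((T : ℝ) * ε)
      = -(2 * (T : ℝ) * ε ^ 2 / c ^ 2) := by
    rw [hsdef]
    field_simp
    ring
  have hup := tail_count Y (-A) (c - A) (fun v => by simp [hYdef]; linarith [hDC0 v])
    (fun v => by simp [hYdef]; linarith [hDCc v]) hmean T ((T : ℝ) * ε) s hs
  have hlow := tail_count (fun v => -Y v) (A - c) A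
    (fun v => by simp [hYdef]; linarith [hDCc v])
    (fun v => by simp [hYdef]; linarith [hDC0 v])
    (by rw [Finset.sum_neg_distrib, hmean, neg_zero]) T ((T : ℝ) * ε) s hs
  rw [show c - A - -A = c by ring] at hup
  rw [show A - (A - c) = c by ring] at hlow
  rw [hexpid] at hup hlow
  -- event inclusion
  set P : (Fin T → V) → Prop :=
    fun ω => ε < |ADPL G - (1 / (T : ℝ)) * ∑ t : Fin T, DC G (ω t)| with hPdef
  have hTpos : (0:ℝ) < (T : ℝ) := by exact_mod_cast hT
  have hincl : Finset.univ.filter P ⊆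
      (Finset.univ.filter (fun ω : Fin T → V => (T : ℝ) * ε < ∑ t : Fin T, Y (ω t))) ∪
      (Finset.univ.filter (fun ω : Fin T → V => (T : ℝ) * ε < ∑ t : Fin T, (fun v => -Y v) (ω t))) := by
    intro ω hω
    have hP : P ω := (Finset.mem_filter.mp hω).2
    have hSY : ∑ t : Fin T, Y (ω t) = (∑ t : Fin T, DC G (ω t)) - (T : ℝ) * A := by
      simp only [hYdef, Finset.sum_sub_distrib, Finset.sum_const, Finset.card_univ,
        Fintype.card_fin, nsmul_eq_mul]
    have habs : (T : ℝ) * ε < |∑ t : Fin T, Y (ω t)| := by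
      have h1 : ADPL G - (1 / (T : ℝ)) * ∑ t : Fin T, DC G (ω t)
          = -((1 / (T : ℝ)) * ∑ t : Fin T, Y (ω t)) := by
        rw [hSY, ← hAdef]
        field_simp
        ring
      rw [hPdef] at hP
      simp only [h1, abs_neg, abs_mul] at hP
      rw [abs_of_pos (by positivity : (0:ℝ) < 1 / (T:ℝ))] at hP
      calc (T : ℝ) * ε < (T : ℝ) * ((1 / (T : ℝ)) * |∑ t : Fin T, Y (ω t)|) := by
            exact mul_lt_mul_of_pos_left hP hTpos
        _ = |∑ t : Fin T, Y (ω t)| := by field_simp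
    rcases lt_abs.mp habs with h | h
    · exact Finset.mem_union_left _ (Finset.mem_filter.mpr ⟨Finset.mem_univ _, h⟩)
    · refine Finset.mem_union_right _ (Finset.mem_filter.mpr ⟨Finset.mem_univ _, ?_⟩)
      simpa [Finset.sum_neg_distrib] using h
  -- counting
  have hcard : (Nat.card {ω : Fin T → V |
      ε < |ADPL G - (1 / (T : ℝ)) * ∑ t : Fin T, DC G (ω t)|} : ℝ)
      = ((Finset.univ.filter P).card : ℝ) := by
    congr 1
    rw [Nat.card_eq_fintype_card]
    exact Fintype.card_subtype _
  have hcards : ((Finset.univ.filter P).card : ℝ)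
      ≤ 2 * (n ^ T * Real.exp (-(2 * (T : ℝ) * ε ^ 2 / c ^ 2))) := by
    have h1 := Finset.card_le_card hincl
    have h2 := Finset.card_union_le
      (Finset.univ.filter (fun ω : Fin T → V => (T : ℝ) * ε < ∑ t : Fin T, Y (ω t)))
      (Finset.univ.filter (fun ω : Fin T → V => (T : ℝ) * ε < ∑ t : Fin T, (fun v => -Y v) (ω t)))
    have h3 : ((Finset.univ.filter P).card : ℝ)
        ≤ ((Finset.univ.filter (fun ω : Fin T → V => (T : ℝ) * ε < ∑ t : Fin T, Y (ω t))).card : ℝ)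
          + ((Finset.univ.filter (fun ω : Fin T → V => (T : ℝ) * ε < ∑ t : Fin T, (fun v => -Y v) (ω t))).card : ℝ) := by
      exact_mod_cast le_trans h1 h2
    linarith [hup, hlow]
  -- final computation
  have hcardfun : (Fintype.card (Fin T → V) : ℝ) = n ^ T := by
    rw [Fintype.card_fun, Fintype.card_fin, hndef]
    push_cast
    ring
  rw [hcard, hcardfun, div_le_iff₀ (by positivity)]
  have hδ2 : Real.exp (-(2 * (T : ℝ) * ε ^ 2 / c ^ 2)) ≤ δ / 2 := by
    have h1 : Real.log (2 / δ) ≤ 2 * (T : ℝ) * ε ^ 2 / c ^ 2 := by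
      rw [div_le_iff₀ (by positivity)] at hTbound
      rw [le_div_iff₀ (by positivity)]
      nlinarith [hTbound]
    calc Real.exp (-(2 * (T : ℝ) * ε ^ 2 / c ^ 2))
        ≤ Real.exp (-(Real.log (2 / δ))) := Real.exp_le_exp.mpr (by linarith)
      _ = δ / 2 := by
          rw [Real.exp_neg, Real.exp_log (by positivity)]
          rw [inv_div]
    -- done
  calc ((Finset.univ.filter P).card : ℝ)
      ≤ 2 * (n ^ T * Real.exp (-(2 * (T : ℝ) * ε ^ 2 / c ^ 2))) := hcards
    _ ≤ 2 * (n ^ T * (δ / 2)) := by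
        refine mul_le_mul_of_nonneg_left (mul_le_mul_of_nonneg_left hδ2 (by positivity)) (by norm_num)
    _ = δ * n ^ T := by ring
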